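/- If every basis pair satisfies the sequential symmetric exchange property in a matroid M, then the same holds in the dual matroid M*: White's conjecture for sequences of length two holds for M if and only if it holds for M*. -/

import Mathlib

/-- A symmetric exchange on an ordered pair of bases. -/
def SymExch {α : Type*} (M : Matroid α) (p p' : Set α × Set α) : Prop :=
  ∃ e ∈ p.1 \ p.2, ∃ f ∈ p.2 \ p.1,
    p'.1 = insert f (p.1 \ {e}) ∧ p'.2 = (insert e p.2) \ {f} ∧
    M.IsBase p'.1 ∧ M.IsBase p'.2

/-- `ExchSeq M n p q` : there is a sequence of `n` symmetric exchanges from `p` to `q`. -/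
def ExchSeq {α : Type*} (M : Matroid α) : ℕ → Set α × Set α → Set α × Set α → Prop
  | 0, p, q => p = q
  | n + 1, p, q => ∃ p', SymExch M p p' ∧ ExchSeq M n p' q

/-- White's conjecture for basis sequences of length two, for a matroid `M`: any two
compatible basis pairs can be transformed into each other by symmetric exchanges. -/
def WhiteTwo {α : Type*} (M : Matroid α) : Prop :=
  ∀ A₁ A₂ B₁ B₂ : Set α,
    M.IsBase A₁ → M.IsBase A₂ → M.IsBase B₁ → M.IsBase B₂ →
    A₁ ∩ A₂ = B₁ ∩ B₂ → A₁ ∪ A₂ = B₁ ∪ B₂ →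
    ∃ n : ℕ, ExchSeq M n (A₁, A₂) (B₁, B₂)

private lemma exchSeq_transfer {α : Type*} (M : Matroid α) :
    ∀ n (X₁ X₂ Y₁ Y₂ : Set α), X₁ ⊆ M.E → X₂ ⊆ M.E → Y₁ ⊆ M.E → Y₂ ⊆ M.E →
      ExchSeq M n (M.E \ X₁, M.E \ X₂) (M.E \ Y₁, M.E \ Y₂) →
      ExchSeq M✶ n (X₁, X₂) (Y₁, Y₂) := by
  intro n
  induction n with
  | zero =>
    intro X₁ X₂ Y₁ Y₂ h1 h2 h3 h4 h
    simp only [ExchSeq, Prod.mk.injEq] at h ⊢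
    constructor
    · rw [← Set.diff_diff_cancel_left h1, h.1, Set.diff_diff_cancel_left h3]
    · rw [← Set.diff_diff_cancel_left h2, h.2, Set.diff_diff_cancel_left h4]
  | succ n ih =>
    intro X₁ X₂ Y₁ Y₂ h1 h2 h3 h4 h
    obtain ⟨p', ⟨e, he, f, hf, hp1, hp2, hb1, hb2⟩, hseq⟩ := h
    simp only [Set.mem_diff] at he hf
    have heE : e ∈ M.E := he.1.1
    have heX₁ : e ∉ X₁ := he.1.2
    have heX₂ : e ∈ X₂ := by
      by_contra hc; exact he.2 ⟨heE, hc⟩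
    have hfE : f ∈ M.E := hf.1.1
    have hfX₂ : f ∉ X₂ := hf.1.2
    have hfX₁ : f ∈ X₁ := by
      by_contra hc; exact hf.2 ⟨hfE, hc⟩
    have hef : e ≠ f := fun h => hfX₂ (h ▸ heX₂)
    set X₁' : Set α := insert e (X₁ \ {f}) with hX₁'
    set X₂' : Set α := (insert f X₂) \ {e} with hX₂'
    have hc1 : M.E \ X₁' = p'.1 := by
      rw [hp1, hX₁']
      ext x
      have pe : x = e → x ∈ M.E ∧ x ∉ X₁ ∧ x ≠ f := fun h => h ▸ ⟨heE, heX₁, hef⟩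
      have pf : x = f → x ∈ M.E ∧ x ∈ X₁ ∧ x ≠ e := fun h => h ▸ ⟨hfE, hfX₁, fun hh => hef hh.symm⟩
      simp only [Set.mem_diff, Set.mem_insert_iff, Set.mem_singleton_iff]
      tauto
    have hc2 : M.E \ X₂' = p'.2 := by
      rw [hp2, hX₂']
      ext x
      have pe : x = e → x ∈ M.E ∧ x ∈ X₂ ∧ x ≠ f := fun h => h ▸ ⟨heE, heX₂, hef⟩
      have pf : x = f → x ∈ M.E ∧ x ∉ X₂ ∧ x ≠ e := fun h => h ▸ ⟨hfE, hfX₂, fun hh => hef hh.symm⟩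
      simp only [Set.mem_diff, Set.mem_insert_iff, Set.mem_singleton_iff]
      tauto
    have hX₁'E : X₁' ⊆ M.E := by
      rw [hX₁']
      exact Set.insert_subset heE ((Set.diff_subset).trans h1)
    have hX₂'E : X₂' ⊆ M.E := by
      rw [hX₂']
      exact (Set.diff_subset).trans (Set.insert_subset hfE h2)
    have hd1 : M✶.IsBase X₁' := by
      rw [Matroid.dual_isBase_iff hX₁'E, hc1]; exact hb1
    have hd2 : M✶.IsBase X₂' := by
      rw [Matroid.dual_isBase_iff hX₂'E, hc2]; exact hb2
    refine ⟨(X₁', X₂'), ⟨f, ⟨hfX₁, hfX₂⟩, e, ⟨heX₂, heX₁⟩, rfl, rfl, hd1, hd2⟩, ?_⟩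
    apply ih X₁' X₂' Y₁ Y₂ hX₁'E hX₂'E h3 h4
    have : p' = (M.E \ X₁', M.E \ X₂') := by
      rw [hc1, hc2]
    rwa [← this]

private lemma whiteTwo_dual {α : Type*} (M : Matroid α) (h : WhiteTwo M) : WhiteTwo M✶ := by
  intro A₁ A₂ B₁ B₂ hA₁ hA₂ hB₁ hB₂ hint huni
  have sA₁ : A₁ ⊆ M.E := hA₁.subset_ground
  have sA₂ : A₂ ⊆ M.E := hA₂.subset_ground
  have sB₁ : B₁ ⊆ M.E := hB₁.subset_ground
  have sB₂ : B₂ ⊆ M.E := hB₂.subset_ground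
  have dA₁ : M.IsBase (M.E \ A₁) := (Matroid.dual_isBase_iff sA₁).mp hA₁
  have dA₂ : M.IsBase (M.E \ A₂) := (Matroid.dual_isBase_iff sA₂).mp hA₂
  have dB₁ : M.IsBase (M.E \ B₁) := (Matroid.dual_isBase_iff sB₁).mp hB₁
  have dB₂ : M.IsBase (M.E \ B₂) := (Matroid.dual_isBase_iff sB₂).mp hB₂
  have hint' : (M.E \ A₁) ∩ (M.E \ A₂) = (M.E \ B₁) ∩ (M.E \ B₂) := by
    rw [Set.diff_inter_diff, Set.diff_inter_diff, huni]
  have huni' : (M.E \ A₁) ∪ (M.E \ A₂) = (M.E \ B₁) ∪ (M.E \ B₂) := by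
    rw [← Set.diff_inter, ← Set.diff_inter, hint]
  obtain ⟨n, hn⟩ := h _ _ _ _ dA₁ dA₂ dB₁ dB₂ hint' huni'
  exact ⟨n, exchSeq_transfer M n A₁ A₂ B₁ B₂ sA₁ sA₂ sB₁ sB₂ hn⟩

/-- White's conjecture for sequences of length two holds for `M` iff it holds for the dual. -/
theorem whiteTwo_dual_iff {α : Type*} (M : Matroid α) : WhiteTwo M ↔ WhiteTwo M✶ := by
  constructor
  · exact whiteTwo_dual M
  · intro h
    have := whiteTwo_dual M✶ h
    rwa [Matroid.dual_dual] at this
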